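/- Fix positive integers k ≤ d and let h be the distribution on [d]^k of k draws without replacement from the urn {1,…,d} (uniform over injective k-tuples). For every probability distribution θ on [d], the i.i.d. product measure θ^{⊗k} satisfies ∑_{x injective} θ^{⊗k}(x) ≤ d^{\underline{k}}/d^k, i.e. the probability that k i.i.d. samples from θ are pairwise distinct is maximized by the uniform distribution on [d]. -/

import Mathlib

/-- Tangent line inequality for `x^(m+1)` (Bernoulli). -/
lemma key_tangent (m : ℕ) (x y : ℝ) (hx : 0 ≤ x) (hy : 0 ≤ y) :
    y ^ (m + 1) + ((m : ℝ) + 1) * y ^ m * (x - y) ≤ x ^ (m + 1) := by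
  rcases eq_or_lt_of_le hy with h0 | h0
  · rcases Nat.eq_zero_or_pos m with hm | hm
    · subst hm; simp [← h0]
    · rw [← h0, zero_pow (by omega), zero_pow (by omega)]
      simpa using pow_nonneg hx (m + 1)
  · set a : ℝ := x / y - 1 with ha
    have hyne : y ≠ 0 := ne_of_gt h0
    have h1 : -2 ≤ a := by
      have : 0 ≤ x / y := div_nonneg hx h0.le
      rw [ha]; linarith
    have hb := one_add_mul_le_pow h1 (m + 1)
    have h2 := mul_le_mul_of_nonneg_right hb (pow_nonneg h0.le (m + 1))
    have e1 : (1 + a) ^ (m + 1) * y ^ (m + 1) = x ^ (m + 1) := by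
      rw [← mul_pow]; congr 1; rw [ha]; field_simp; ring
    have hay : a * y = x - y := by rw [ha]; field_simp
    have e2 : (1 + (↑(m + 1) : ℝ) * a) * y ^ (m + 1)
        = y ^ (m + 1) + ((m : ℝ) + 1) * y ^ m * (x - y) := by
      calc (1 + (↑(m + 1) : ℝ) * a) * y ^ (m + 1)
          = y ^ (m + 1) + ((m : ℝ) + 1) * (a * y) * y ^ m := by push_cast; ring
        _ = y ^ (m + 1) + ((m : ℝ) + 1) * y ^ m * (x - y) := by rw [hay]; ring
    rw [e1, e2] at h2
    exact h2

lemma choose_tangent (n m : ℕ) (u c : ℝ) (hu : 0 ≤ u) (hc : 0 ≤ c) :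
    (n.choose (m + 1) : ℝ) * u ^ (m + 1) + c * (n.choose m : ℝ) * u ^ m
      ≤ ((n + 1).choose (m + 1) : ℝ) * (((n : ℝ) * u + c) / ((n : ℝ) + 1)) ^ (m + 1) := by
  have hn1 : (0 : ℝ) < (n : ℝ) + 1 := by positivity
  set x : ℝ := ((n : ℝ) * u + c) / ((n : ℝ) + 1) with hxdef
  have hx : 0 ≤ x := by
    rw [hxdef]; positivity
  have hk := key_tangent m x u hx hu
  have h3 := mul_le_mul_of_nonneg_left hk
    (by positivity : (0:ℝ) ≤ ((n + 1).choose (m + 1) : ℝ))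
  refine le_trans (le_of_eq ?_) h3
  have hC : ((n + 1).choose (m + 1) : ℝ) = (n.choose m : ℝ) + (n.choose (m + 1) : ℝ) := by
    exact_mod_cast Nat.choose_succ_succ (n) (m)
  have hC2 : ((n : ℝ) + 1) * (n.choose m : ℝ) = ((n + 1).choose (m + 1) : ℝ) * ((m : ℝ) + 1) := by
    exact_mod_cast Nat.add_one_mul_choose_eq n m
  have hxu : x - u = (c - u) / ((n : ℝ) + 1) := by
    rw [hxdef]; field_simp; ring
  rw [hxu, hC]
  field_simp
  linear_combination (u ^ m * (c - u)) * hC2 + ((m:ℝ)+1) * u ^ m * (c - u) * hC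

lemma esymm_le {ι : Type*} [DecidableEq ι] (θ : ι → ℝ) (hθ : ∀ i, 0 ≤ θ i) (s : Finset ι) :
    ∀ k : ℕ, ∑ S ∈ s.powersetCard k, ∏ i ∈ S, θ i
      ≤ (s.card.choose k : ℝ) * ((∑ i ∈ s, θ i) / (s.card : ℝ)) ^ k := by
  induction s using Finset.induction_on with
  | empty =>
    intro k
    cases k with
    | zero => simp
    | succ m =>
      rw [Finset.powersetCard_eq_empty.2 (by simp)]
      simp
  | @insert a s ha ih =>
    intro k
    cases k with
    | zero => simp
    | succ m =>
      rw [Finset.powersetCard_succ_insert ha]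
      have hdisj : Disjoint (s.powersetCard (m + 1)) ((s.powersetCard m).image (insert a)) := by
        rw [Finset.disjoint_left]
        intro S hS hS'
        have haS : a ∉ S := fun h => ha ((Finset.mem_powersetCard.1 hS).1 h)
        obtain ⟨T, hT, rfl⟩ := Finset.mem_image.1 hS'
        exact haS (Finset.mem_insert_self a T)
      rw [Finset.sum_union hdisj]
      have hinj : ∀ S ∈ s.powersetCard m, ∀ T ∈ s.powersetCard m,
          insert a S = insert a T → S = T := by
        intro S hS T hT h
        have haS : a ∉ S := fun hh => ha ((Finset.mem_powersetCard.1 hS).1 hh)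
        have haT : a ∉ T := fun hh => ha ((Finset.mem_powersetCard.1 hT).1 hh)
        rw [← Finset.erase_insert haS, ← Finset.erase_insert haT, h]
      rw [Finset.sum_image hinj]
      have hprod : ∑ S ∈ s.powersetCard m, ∏ i ∈ insert a S, θ i
          = θ a * ∑ S ∈ s.powersetCard m, ∏ i ∈ S, θ i := by
        rw [Finset.mul_sum]
        refine Finset.sum_congr rfl fun S hS => ?_
        have haS : a ∉ S := fun hh => ha ((Finset.mem_powersetCard.1 hS).1 hh)
        rw [Finset.prod_insert haS]
      rw [hprod]
      set n := s.card with hn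
      set T := ∑ i ∈ s, θ i with hT
      have hTnn : 0 ≤ T := Finset.sum_nonneg fun i _ => hθ i
      set u := T / (n : ℝ) with hu
      have hunn : 0 ≤ u := div_nonneg hTnn (by positivity)
      have hnu : (n : ℝ) * u = T := by
        rcases Nat.eq_zero_or_pos n with h0 | h0
        · have hs : s = ∅ := Finset.card_eq_zero.1 (hn ▸ h0)
          simp [hT, hs, h0]
        · rw [hu]; field_simp
      have h1 : ∑ S ∈ s.powersetCard (m + 1), ∏ i ∈ S, θ i + θ a * ∑ S ∈ s.powersetCard m, ∏ i ∈ S, θ i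
          ≤ (n.choose (m + 1) : ℝ) * u ^ (m + 1) + θ a * ((n.choose m : ℝ) * u ^ m) :=
        add_le_add (ih (m + 1)) (mul_le_mul_of_nonneg_left (ih m) (hθ a))
      refine h1.trans ?_
      have h2 := choose_tangent n m u (θ a) hunn (hθ a)
      rw [hnu] at h2
      have hcard : (insert a s).card = n + 1 := Finset.card_insert_of_notMem ha
      have hsum : ∑ i ∈ insert a s, θ i = T + θ a := by
        rw [Finset.sum_insert ha]; ring
      rw [hcard, hsum]
      push_cast
      exact le_trans (le_of_eq (by ring)) h2



open scoped Classical in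
/-- The probability that `k` i.i.d. samples from a distribution `θ` on `[d]` are
pairwise distinct is at most `d^{\underline{k}}/d^k` (the value for the uniform
distribution): `∑_{x injective} ∏_i θ(x_i) ≤ d^{\underline{k}}/d^k`. -/
theorem stmt16 (d k : ℕ) (hd : 0 < d) (hkd : k ≤ d) (θ : Fin d → ℝ)
    (hθ0 : ∀ i, 0 ≤ θ i) (hθ1 : ∑ i, θ i = 1) :
    ∑ x ∈ Finset.univ.filter (fun x : Fin k → Fin d => Function.Injective x),
        ∏ i, θ (x i) ≤ (d.descFactorial k : ℝ) / (d : ℝ) ^ k := by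
  have hmap : ∀ x ∈ Finset.univ.filter (fun x : Fin k → Fin d => Function.Injective x),
      (Finset.image x Finset.univ) ∈ (Finset.univ : Finset (Fin d)).powersetCard k := by
    intro x hx
    have hinj : Function.Injective x := (Finset.mem_filter.1 hx).2
    rw [Finset.mem_powersetCard]
    exact ⟨Finset.subset_univ _, by
      rw [Finset.card_image_of_injective _ hinj, Finset.card_univ, Fintype.card_fin]⟩
  rw [← Finset.sum_fiberwise_of_maps_to hmap]
  have hfiber : ∀ S ∈ (Finset.univ : Finset (Fin d)).powersetCard k,
      ∑ x ∈ (Finset.univ.filter fun x : Fin k → Fin d => Function.Injective x).filter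
          (fun x => Finset.image x Finset.univ = S), ∏ i, θ (x i)
        = (k.factorial : ℝ) * ∏ i ∈ S, θ i := by
    intro S hS
    have hScard : S.card = k := (Finset.mem_powersetCard.1 hS).2
    have hval : ∀ x ∈ (Finset.univ.filter fun x : Fin k → Fin d => Function.Injective x).filter
          (fun x => Finset.image x Finset.univ = S), ∏ i, θ (x i) = ∏ i ∈ S, θ i := by
      intro x hx
      obtain ⟨hx1, hx2⟩ := Finset.mem_filter.1 hx
      have hinj : Function.Injective x := (Finset.mem_filter.1 hx1).2
      rw [← hx2, Finset.prod_image (fun i _ j _ h => hinj h)]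
    rw [Finset.sum_congr rfl hval, Finset.sum_const, nsmul_eq_mul]
    congr 1
    have e : {x // x ∈ (Finset.univ.filter fun x : Fin k → Fin d => Function.Injective x).filter
          (fun x => Finset.image x Finset.univ = S)} ≃ (Fin k ↪ {i // i ∈ S}) := by
      refine ⟨fun ⟨x, hx⟩ => ⟨fun i => ⟨x i, ?_⟩, ?_⟩, fun e => ⟨fun i => (e i : Fin d), ?_⟩,
        fun ⟨x, hx⟩ => rfl, fun e => by ext i; rfl⟩
      · obtain ⟨hx1, hx2⟩ := Finset.mem_filter.1 hx
        rw [← hx2]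
        exact Finset.mem_image_of_mem x (Finset.mem_univ i)
      · intro i j h
        exact (Finset.mem_filter.1 (Finset.mem_filter.1 hx).1).2 (congrArg Subtype.val h)
      · have hinj : Function.Injective fun i : Fin k => ((e i : Fin d)) :=
          fun i j h => e.injective (Subtype.ext h)
        have hsub : Finset.image (fun i : Fin k => ((e i : Fin d))) Finset.univ ⊆ S := by
          intro j hj
          obtain ⟨i, _, rfl⟩ := Finset.mem_image.1 hj
          exact (e i).2
        have hcardim : (Finset.image (fun i : Fin k => ((e i : Fin d))) Finset.univ).card = k := by
          rw [Finset.card_image_of_injective _ hinj, Finset.card_univ, Fintype.card_fin]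
        refine Finset.mem_filter.2 ⟨Finset.mem_filter.2 ⟨Finset.mem_univ _, hinj⟩, ?_⟩
        exact Finset.eq_of_subset_of_card_le hsub (by rw [hcardim, hScard])
    rw [← Fintype.card_coe, Fintype.card_congr e, Fintype.card_embedding_eq,
      Fintype.card_coe, Fintype.card_fin, hScard, Nat.descFactorial_self]
  rw [Finset.sum_congr rfl hfiber, ← Finset.mul_sum]
  have hB := esymm_le θ hθ0 Finset.univ k
  rw [Finset.card_univ, Fintype.card_fin, hθ1] at hB
  calc (k.factorial : ℝ) * ∑ S ∈ (Finset.univ : Finset (Fin d)).powersetCard k, ∏ i ∈ S, θ i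
      ≤ (k.factorial : ℝ) * ((d.choose k : ℝ) * (1 / (d : ℝ)) ^ k) :=
        mul_le_mul_of_nonneg_left hB (by positivity)
    _ = (d.descFactorial k : ℝ) / (d : ℝ) ^ k := by
        rw [Nat.descFactorial_eq_factorial_mul_choose]
        have hdne : (d : ℝ) ≠ 0 := Nat.cast_ne_zero.2 hd.ne'
        push_cast
        field_simp
        rw [mul_assoc, ← mul_pow, one_div_mul_cancel hdne, one_pow, mul_one]
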